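/- arXiv:2406.15122 — 3 statements merged into one kernel-verified Lean document; each statement's English description precedes it below -/
import Mathlib

section
/- Suppose a ∈ ℓ¹(ℤ) with Fourier transform â, and suppose â(ω) is real with μ ≥ â(ω) ≥ ν > 0 for all ω ∈ 𝕋. Let g ∈ ℓ²(ℤ) be the sequence with ĝ = indicator of (−1/4, 1/4). Then for every s ∈ ℕ and every integer n with |n| ≤ 1, |(a^(s) ∗ g)(n)| ≥ (2/π)·ν^s. -/
open scoped Real

/-- Convolution of two sequences on `ℤ`. -/
noncomputable def conv (x y : ℤ → ℂ) (j : ℤ) : ℂ := ∑' k : ℤ, x k * y (j - k)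

/-- `s`-fold convolution power of a kernel (`a^(0)` is the Dirac delta). -/
noncomputable def convPow (a : ℤ → ℂ) : ℕ → ℤ → ℂ
  | 0 => fun n => if n = 0 then 1 else 0
  | s + 1 => conv a (convPow a s)

/-- `â(ω) := ∑_{k∈ℤ} a(k) e^{-2πikω}`. -/
noncomputable def ahat (a : ℤ → ℂ) (ω : ℝ) : ℂ :=
  ∑' k : ℤ, a k * Complex.exp (-2 * π * Complex.I * k * ω)

/-- The sequence whose Fourier transform is the indicator of `(-1/4, 1/4)`. -/
noncomputable def g (n : ℤ) : ℂ :=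
  if n = 0 then 1 else 2 * Real.sin (n * Real.pi / 2) / (n * Real.pi)

noncomputable def ee (k : ℤ) (ω : ℝ) : ℂ := Complex.exp (-2 * π * Complex.I * k * ω)

lemma ee_eq (k : ℤ) (ω : ℝ) : ee k ω = Complex.exp ((((-2) * π * k * ω : ℝ) : ℂ) * Complex.I) := by
  unfold ee; congr 1; push_cast; ring

lemma norm_ee (k : ℤ) (ω : ℝ) : ‖ee k ω‖ = 1 := by
  rw [ee_eq]; exact Complex.norm_exp_ofReal_mul_I _

lemma ee_add (k m : ℤ) (ω : ℝ) : ee (k + m) ω = ee k ω * ee m ω := by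
  unfold ee; rw [← Complex.exp_add]; congr 1; push_cast; ring

lemma ahat_eq (a : ℤ → ℂ) (ω : ℝ) : ahat a ω = ∑' k : ℤ, a k * ee k ω := rfl

lemma summable_aek {a : ℤ → ℂ} (ha : Summable fun k => ‖a k‖) (ω : ℝ) :
    Summable fun k => ‖a k * ee k ω‖ := by
  simpa only [norm_mul, norm_ee, mul_one] using ha

/-- index shuffle -/
def φ : ℤ × ℤ ≃ ℤ × ℤ where
  toFun q := (q.1 + q.2, q.1)
  invFun p := (p.2, p.1 - p.2)
  left_inv := by rintro ⟨k, m⟩; simp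
  right_inv := by rintro ⟨j, k⟩; simp

lemma summable_G {b c : ℤ → ℂ} (hb : Summable fun k => ‖b k‖) (hc : Summable fun k => ‖c k‖) :
    Summable fun p : ℤ × ℤ => ‖b p.2 * c (p.1 - p.2)‖ := by
  have h1 : Summable fun p : ℤ × ℤ => ‖b p.1‖ * ‖c p.2‖ :=
    hb.mul_of_nonneg hc (fun _ => norm_nonneg _) fun _ => norm_nonneg _
  refine (φ.summable_iff (f := fun p : ℤ × ℤ => ‖b p.2 * c (p.1 - p.2)‖)).mp ?_
  refine h1.congr fun q => ?_
  simp only [Function.comp, φ, Equiv.coe_fn_mk, norm_mul, add_sub_cancel_left]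

lemma conv_norm_summable {b c : ℤ → ℂ} (hb : Summable fun k => ‖b k‖)
    (hc : Summable fun k => ‖c k‖) : Summable fun j => ‖conv b c j‖ := by
  have hG := summable_G hb hc
  refine Summable.of_nonneg_of_le (fun j => norm_nonneg _) (fun j => ?_) hG.prod
  exact norm_tsum_le_tsum_norm (hG.prod_factor j)

lemma ahat_conv {b c : ℤ → ℂ} (hb : Summable fun k => ‖b k‖)
    (hc : Summable fun k => ‖c k‖) (ω : ℝ) :
    ahat (conv b c) ω = ahat b ω * ahat c ω := by
  have hG : Summable fun p : ℤ × ℤ => ‖b p.2 * c (p.1 - p.2) * ee p.1 ω‖ := by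
    simpa only [norm_mul, norm_ee, mul_one] using summable_G hb hc
  calc ahat (conv b c) ω
      = ∑' j : ℤ, ∑' k : ℤ, b k * c (j - k) * ee j ω := by
        rw [ahat_eq]
        refine tsum_congr fun j => ?_
        rw [conv, ← tsum_mul_right]
    _ = ∑' p : ℤ × ℤ, b p.2 * c (p.1 - p.2) * ee p.1 ω := (Summable.tsum_prod hG.of_norm).symm
    _ = ∑' q : ℤ × ℤ, (b q.1 * ee q.1 ω) * (c q.2 * ee q.2 ω) := by
        rw [← φ.tsum_eq (f := fun p : ℤ × ℤ => b p.2 * c (p.1 - p.2) * ee p.1 ω)]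
        refine tsum_congr fun q => ?_
        simp only [φ, Equiv.coe_fn_mk, add_sub_cancel_left]
        rw [ee_add]; ring
    _ = ahat b ω * ahat c ω := by
        rw [ahat_eq, ahat_eq]
        exact (tsum_mul_tsum_of_summable_norm (summable_aek hb ω) (summable_aek hc ω)).symm

lemma convPow_norm_summable {a : ℤ → ℂ} (ha : Summable fun k => ‖a k‖) (s : ℕ) :
    Summable fun k => ‖convPow a s k‖ := by
  induction s with
  | zero =>
    apply summable_of_ne_finset_zero (s := ({0} : Finset ℤ))
    intro b hb
    simp only [Finset.mem_singleton] at hb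
    simp [convPow, hb]
  | succ s ih => exact conv_norm_summable ha ih

lemma ahat_convPow {a : ℤ → ℂ} (ha : Summable fun k => ‖a k‖) (s : ℕ) (ω : ℝ) :
    ahat (convPow a s) ω = (ahat a ω) ^ s := by
  induction s with
  | zero =>
    rw [ahat_eq]
    rw [tsum_eq_single 0 (by intro b hb; simp [convPow, hb])]
    simp [convPow, ee]
  | succ s ih =>
    show ahat (conv a (convPow a s)) ω = _
    rw [ahat_conv ha (convPow_norm_summable ha s) ω, ih, pow_succ, mul_comm]

lemma exp_eq_ee (m : ℤ) (ω : ℝ) :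
    Complex.exp (2 * π * Complex.I * m * ω) = ee (-m) ω := by
  unfold ee; congr 1; push_cast; ring

lemma nnnorm_ee (k : ℤ) (ω : ℝ) : ‖ee k ω‖₊ = 1 :=
  NNReal.coe_injective (by rw [coe_nnnorm, norm_ee, NNReal.coe_one])

lemma cont_exp_mul (c : ℂ) : Continuous fun ω : ℝ => Complex.exp (c * ω) :=
  Complex.continuous_exp.comp (continuous_const.mul Complex.continuous_ofReal)

lemma cont_ee (k : ℤ) : Continuous (ee k) := by
  have := cont_exp_mul (-2 * π * Complex.I * k)
  exact this

lemma cont_ahat {h : ℤ → ℂ} (hh : Summable fun k => ‖h k‖) : Continuous (ahat h) := by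
  have : Continuous fun ω : ℝ => ∑' k : ℤ, h k * ee k ω := by
    refine continuous_tsum (fun k => (continuous_const.mul (cont_ee k))) hh fun k ω => ?_
    rw [norm_mul, norm_ee, mul_one]
  exact this

lemma g_eq (m : ℤ) :
    g m = 2 * ∫ ω in (-(4⁻¹ : ℝ))..4⁻¹, Complex.exp (2 * π * Complex.I * m * ω) := by
  rcases eq_or_ne m 0 with hm | hm
  · subst hm
    have h1 : ∀ ω : ℝ, Complex.exp (2 * π * Complex.I * ((0:ℤ):ℂ) * ω) = 1 := by
      intro ω; norm_num
    simp only [h1, intervalIntegral.integral_const, g, if_pos rfl]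
    norm_num [Complex.real_smul]
  · have hπ : (π : ℂ) ≠ 0 := Complex.ofReal_ne_zero.mpr Real.pi_ne_zero
    have hmC : (m : ℂ) ≠ 0 := Int.cast_ne_zero.mpr hm
    have hc : (2 * (π:ℂ) * Complex.I * m) ≠ 0 := by
      apply mul_ne_zero (mul_ne_zero (mul_ne_zero two_ne_zero hπ) Complex.I_ne_zero) hmC
    rw [integral_exp_mul_complex hc]
    have e1 : (2 * (π:ℂ) * Complex.I * m) * ((4⁻¹:ℝ):ℂ) = (((m:ℝ) * π / 2 : ℝ) : ℂ) * Complex.I := by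
      push_cast; ring
    have e2 : (2 * (π:ℂ) * Complex.I * m) * ((-(4⁻¹):ℝ):ℂ)
        = ((-((m:ℝ) * π / 2) : ℝ) : ℂ) * Complex.I := by
      push_cast; ring
    rw [e1, e2, Complex.exp_mul_I, Complex.exp_mul_I]
    simp only [Complex.ofReal_neg, Complex.cos_neg, Complex.sin_neg, ← Complex.ofReal_sin,
      ← Complex.ofReal_cos]
    unfold g; rw [if_neg hm]
    field_simp
    ring_nf

lemma quarter_le : (-(4⁻¹ : ℝ)) ≤ 4⁻¹ := by norm_num

lemma conv_g_eq {h : ℤ → ℂ} (hh : Summable fun k => ‖h k‖) (n : ℤ) :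
    conv h g n
      = 2 * ∫ ω in Set.Ioc (-(4⁻¹:ℝ)) 4⁻¹,
          ahat h ω * Complex.exp (2 * π * Complex.I * n * ω) := by
  have hBody : ∀ ω : ℝ, ahat h ω * Complex.exp (2 * π * Complex.I * n * ω)
      = ∑' k : ℤ, h k * Complex.exp (2 * π * Complex.I * ((n - k : ℤ) : ℂ) * ω) := by
    intro ω
    rw [ahat_eq, ← tsum_mul_right]
    refine tsum_congr fun k => ?_
    rw [exp_eq_ee, exp_eq_ee, mul_assoc]
    congr 1
    rw [show -(n - k) = k + (-n) by ring, ee_add]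
  have hmeas : ∀ k : ℤ, MeasureTheory.AEStronglyMeasurable
      (fun ω : ℝ => h k * Complex.exp (2 * π * Complex.I * ((n - k : ℤ) : ℂ) * ω))
      (MeasureTheory.volume.restrict (Set.Ioc (-(4⁻¹:ℝ)) 4⁻¹)) := by
    intro k
    exact ((continuous_const.mul
      (cont_exp_mul (2 * π * Complex.I * ((n - k : ℤ) : ℂ)))).aestronglyMeasurable)
  have hlin : ∑' k : ℤ, ∫⁻ ω in Set.Ioc (-(4⁻¹:ℝ)) 4⁻¹,
      ‖h k * Complex.exp (2 * π * Complex.I * ((n - k : ℤ) : ℂ) * ω)‖₊ ≠ ⊤ := by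
    have hval : ∀ k : ℤ, ∫⁻ ω in Set.Ioc (-(4⁻¹:ℝ)) 4⁻¹,
        ‖h k * Complex.exp (2 * π * Complex.I * ((n - k : ℤ) : ℂ) * ω)‖₊
        = (‖h k‖₊ : ENNReal) * ENNReal.ofReal (4⁻¹ - -(4⁻¹)) := by
      intro k
      have : ∀ ω : ℝ, (‖h k * Complex.exp (2 * π * Complex.I * ((n - k : ℤ) : ℂ) * ω)‖₊ : ENNReal)
          = (‖h k‖₊ : ENNReal) := by
        intro ω
        rw [exp_eq_ee, nnnorm_mul, nnnorm_ee, mul_one]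
      simp only [this]
      rw [MeasureTheory.setLIntegral_const, Real.volume_Ioc]
    simp only [hval]
    rw [ENNReal.tsum_mul_right]
    exact ENNReal.mul_ne_top
      (ENNReal.tsum_coe_ne_top_iff_summable.mpr
        (NNReal.summable_coe.mp (by simpa only [coe_nnnorm] using hh)))
      ENNReal.ofReal_ne_top
  calc conv h g n
      = ∑' k : ℤ, h k * (2 * ∫ ω in Set.Ioc (-(4⁻¹:ℝ)) 4⁻¹,
          Complex.exp (2 * π * Complex.I * ((n - k : ℤ) : ℂ) * ω)) := by
        refine tsum_congr fun k => ?_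
        rw [g_eq (n - k), intervalIntegral.integral_of_le quarter_le]
    _ = 2 * ∑' k : ℤ, ∫ ω in Set.Ioc (-(4⁻¹:ℝ)) 4⁻¹,
          h k * Complex.exp (2 * π * Complex.I * ((n - k : ℤ) : ℂ) * ω) := by
        rw [← tsum_mul_left]
        refine tsum_congr fun k => ?_
        rw [MeasureTheory.integral_const_mul]
        ring
    _ = 2 * ∫ ω in Set.Ioc (-(4⁻¹:ℝ)) 4⁻¹,
          ∑' k : ℤ, h k * Complex.exp (2 * π * Complex.I * ((n - k : ℤ) : ℂ) * ω) := by
        rw [MeasureTheory.integral_tsum hmeas hlin]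
    _ = _ := by
        congr 1
        refine MeasureTheory.setIntegral_congr_fun measurableSet_Ioc fun ω _ => ?_
        rw [hBody ω]

lemma int_cos_quarter : ∫ ω in Set.Ioc (-(4⁻¹:ℝ)) 4⁻¹, Real.cos (2 * π * ω) = π⁻¹ := by
  have hπ := Real.pi_pos
  rw [← intervalIntegral.integral_of_le quarter_le]
  have h2π : (2 * π) ≠ 0 := by positivity
  rw [intervalIntegral.integral_comp_mul_left Real.cos h2π, integral_cos,
    show 2 * π * (4⁻¹:ℝ) = π / 2 by ring, show 2 * π * (-(4⁻¹):ℝ) = -(π / 2) by ring,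
    Real.sin_neg, Real.sin_pi_div_two, smul_eq_mul]
  rw [show (1:ℝ) - -1 = 2 by norm_num, mul_inv]
  field_simp

/-- if `â` is real with `μ ≥ â ≥ ν > 0` on `𝕋`, then for every `s ∈ ℕ`
and `|n| ≤ 1`, `|(a^(s) ∗ g)(n)| ≥ (2/π) ν^s`. -/
theorem conv_power_lower_bound (a : ℤ → ℂ) (ha : Summable fun k => ‖a k‖)
    (μ ν : ℝ) (hν : 0 < ν)
    (hreal : ∀ ω : ℝ, (ahat a ω).im = 0)
    (hlb : ∀ ω : ℝ, ν ≤ (ahat a ω).re) (hub : ∀ ω : ℝ, (ahat a ω).re ≤ μ) :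
    ∀ (s : ℕ) (n : ℤ), |n| ≤ 1 → 2 / Real.pi * ν ^ s ≤ ‖conv (convPow a s) g n‖ := by
  intro s n hn
  have hπ := Real.pi_pos
  set S := Set.Ioc (-(4⁻¹:ℝ)) 4⁻¹ with hS
  set f : ℝ → ℂ := fun ω => (ahat a ω) ^ s * Complex.exp (2 * π * Complex.I * n * ω) with hf
  have hrep : conv (convPow a s) g n = 2 * ∫ ω in S, f ω := by
    rw [conv_g_eq (convPow_norm_summable ha s) n]
    congr 1
    refine MeasureTheory.setIntegral_congr_fun measurableSet_Ioc fun ω _ => ?_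
    rw [hf, ahat_convPow ha s]
  set r : ℝ → ℝ := fun ω => (ahat a ω).re with hr
  have hra : ∀ ω, ahat a ω = ((r ω : ℝ) : ℂ) := fun ω => Complex.ext rfl (by simp [hr, hreal ω])
  have hfre : ∀ ω, (f ω).re = r ω ^ s * Real.cos (2 * π * n * ω) := by
    intro ω
    have h2 : Complex.exp (2 * π * Complex.I * n * ω)
        = Complex.exp (((2 * π * n * ω : ℝ) : ℂ) * Complex.I) := by
      congr 1; push_cast; ring
    rw [hf]
    simp only [hra ω, ← Complex.ofReal_pow, h2]
    rw [Complex.re_ofReal_mul, Complex.exp_ofReal_mul_I_re]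
  have hfc : Continuous f :=
    ((cont_ahat ha).pow s).mul (cont_exp_mul (2 * π * Complex.I * n))
  have hfint : MeasureTheory.IntegrableOn f S := hfc.integrableOn_Ioc
  have hcosc : Continuous fun ω : ℝ => Real.cos (2 * π * n * ω) :=
    Real.continuous_cos.comp (continuous_const.mul continuous_id)
  have hcos : ∀ ω ∈ S, 0 ≤ Real.cos (2 * π * n * ω) := by
    intro ω hω
    apply Real.cos_nonneg_of_mem_Icc
    have hanb : |(n:ℝ)| ≤ 1 := by exact_mod_cast hn
    have hω' : |ω| ≤ 4⁻¹ := abs_le.mpr ⟨hω.1.le, hω.2⟩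
    have habs : |2 * π * n * ω| ≤ π / 2 := by
      rw [abs_mul, abs_mul, abs_mul, abs_two, abs_of_pos hπ]
      have h1 : 2 * π * |(n:ℝ)| ≤ 2 * π * 1 := by nlinarith
      have h2' : 2 * π * |(n:ℝ)| * |ω| ≤ 2 * π * 1 * 4⁻¹ :=
        mul_le_mul h1 hω' (abs_nonneg _) (by positivity)
      linarith
    exact Set.mem_Icc.mpr (abs_le.mp habs)
  -- the key lower bound
  have key : 2 * (ν ^ s * ∫ ω in S, Real.cos (2 * π * n * ω)) ≤ ‖conv (convPow a s) g n‖ := by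
    have h1 : (conv (convPow a s) g n).re ≤ ‖conv (convPow a s) g n‖ := by
      exact Complex.re_le_norm _
    refine le_trans ?_ h1
    rw [hrep]
    have hre2 : ((2:ℂ) * ∫ ω in S, f ω).re = 2 * (∫ ω in S, f ω).re := by
      simp [Complex.mul_re]
    have hint_re : ∫ ω in S, (f ω).re = (∫ ω in S, f ω).re := by
      simpa using integral_re hfint
    rw [hre2, ← hint_re]
    have hmono : ∫ ω in S, ν ^ s * Real.cos (2 * π * n * ω) ∂MeasureTheory.volume
        ≤ ∫ ω in S, (f ω).re ∂MeasureTheory.volume := by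
      refine MeasureTheory.setIntegral_mono_on
        ((continuous_const.mul hcosc).integrableOn_Ioc)
        ((Complex.continuous_re.comp hfc).integrableOn_Ioc)
        measurableSet_Ioc fun ω hω => ?_
      rw [hfre ω]
      exact mul_le_mul_of_nonneg_right (pow_le_pow_left₀ hν.le (hlb ω) s) (hcos ω hω)
    rw [MeasureTheory.integral_const_mul] at hmono
    linarith
  -- case analysis on n
  obtain ⟨hn1, hn2⟩ := abs_le.mp hn
  interval_cases n
  · -- n = -1
    have hcong : ∫ ω in S, Real.cos (2 * π * ((-1:ℤ):ℝ) * ω) = π⁻¹ := by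
      rw [← int_cos_quarter]
      refine MeasureTheory.setIntegral_congr_fun measurableSet_Ioc fun ω _ => ?_
      push_cast
      rw [show 2 * π * (-1:ℝ) * ω = -(2 * π * ω) by ring, Real.cos_neg]
    rw [hcong] at key
    calc 2 / π * ν ^ s = 2 * (ν ^ s * π⁻¹) := by ring
      _ ≤ _ := key
  · -- n = 0
    have hcong : ∫ ω in S, Real.cos (2 * π * ((0:ℤ):ℝ) * ω) = 2⁻¹ := by
      have : ∀ ω ∈ S, Real.cos (2 * π * ((0:ℤ):ℝ) * ω) = 1 := by
        intro ω _; norm_num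
      rw [MeasureTheory.setIntegral_congr_fun measurableSet_Ioc this,
        MeasureTheory.setIntegral_const, Real.volume_real_Ioc]
      rw [smul_eq_mul, mul_one]
      norm_num
    rw [hcong] at key
    have h2π : 2 / π ≤ 1 := (div_le_one hπ).mpr Real.two_le_pi
    calc 2 / π * ν ^ s ≤ 1 * ν ^ s := by gcongr <;> positivity
      _ = 2 * (ν ^ s * 2⁻¹) := by ring
      _ ≤ _ := key
  · -- n = 1
    have hcong : ∫ ω in S, Real.cos (2 * π * ((1:ℤ):ℝ) * ω) = π⁻¹ := by
      rw [← int_cos_quarter]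
      refine MeasureTheory.setIntegral_congr_fun measurableSet_Ioc fun ω _ => ?_
      push_cast
      ring_nf
    rw [hcong] at key
    calc 2 / π * ν ^ s = 2 * (ν ^ s * π⁻¹) := by ring
      _ ≤ _ := key
end

section
/- Let V(z_0,…,z_{m−1}) be the m×m Vandermonde matrix with rows (z_0^k, z_1^k, …, z_{m−1}^k) for k = 0,…,m−1, with distinct complex nodes z_0,…,z_{m−1}. Then the operator norm of its inverse satisfies ‖V^{−1}‖_op ≤ √m · max_{0≤i≤m−1} ∏_{j≠i} (1+|z_j|)/|z_j − z_i|. -/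
open Polynomial Finset

/-- Operator (spectral) norm of a complex matrix, acting `ℓ² → ℓ²`. -/
noncomputable def matOpNorm {m n : ℕ} (M : Matrix (Fin m) (Fin n) ℂ) : ℝ :=
  ‖LinearMap.toContinuousLinearMap (Matrix.toEuclideanLin M)‖

/-- The `m × m` Vandermonde matrix with rows `(z_0^k, …, z_{m-1}^k)`, `k = 0, …, m-1`. -/
def vandermonde' (m : ℕ) (z : Fin m → ℂ) : Matrix (Fin m) (Fin m) ℂ :=
  fun k i => z i ^ (k : ℕ)

/-- Sum of norms of coefficients of `∏ (X - C a j)` is at most `∏ (1 + ‖a j‖)`. -/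
lemma sum_norm_coeff_prod_le {ι : Type*} [DecidableEq ι] (s : Finset ι) (a : ι → ℂ) :
    ∑ k ∈ Finset.range (s.card + 1), ‖(∏ j ∈ s, (X - C (a j))).coeff k‖
      ≤ ∏ j ∈ s, (1 + ‖a j‖) := by
  induction s using Finset.induction_on with
  | empty => simp
  | @insert i s hi ih =>
    have hdeg : (∏ j ∈ s, (X - C (a j))).natDegree ≤ s.card := by
      refine le_trans (Polynomial.natDegree_prod_le _ _) ?_
      simp [Polynomial.natDegree_X_sub_C]
    set p := ∏ j ∈ s, (X - C (a j)) with hp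
    have hins : ∏ j ∈ insert i s, (X - C (a j)) = (X - C (a i)) * p :=
      Finset.prod_insert hi
    have hcard : (insert i s).card = s.card + 1 := Finset.card_insert_of_notMem hi
    rw [hins, hcard, Finset.prod_insert hi]
    have hcoeff : ∀ k, ((X - C (a i)) * p).coeff k
        = (X * p).coeff k - a i * p.coeff k := by
      intro k
      rw [sub_mul, Polynomial.coeff_sub, Polynomial.coeff_C_mul]
    have hS1 : ∑ k ∈ Finset.range (s.card + 1 + 1), ‖(X * p).coeff k‖
        = ∑ k ∈ Finset.range (s.card + 1), ‖p.coeff k‖ := by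
      rw [Finset.sum_range_succ']
      simp [Polynomial.coeff_X_mul, Polynomial.mul_coeff_zero]
    have hS2 : ∑ k ∈ Finset.range (s.card + 1 + 1), ‖a i * p.coeff k‖
        = ‖a i‖ * ∑ k ∈ Finset.range (s.card + 1), ‖p.coeff k‖ := by
      rw [Finset.sum_range_succ,
        Polynomial.coeff_eq_zero_of_natDegree_lt (lt_of_le_of_lt hdeg (Nat.lt_succ_self _))]
      simp [Finset.mul_sum]
    have hnn : (0:ℝ) ≤ ∑ k ∈ Finset.range (s.card + 1), ‖p.coeff k‖ :=
      Finset.sum_nonneg fun _ _ => norm_nonneg _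
    calc ∑ k ∈ Finset.range (s.card + 1 + 1), ‖((X - C (a i)) * p).coeff k‖
        ≤ ∑ k ∈ Finset.range (s.card + 1 + 1), (‖(X * p).coeff k‖ + ‖a i * p.coeff k‖) := by
          refine Finset.sum_le_sum fun k _ => ?_
          rw [hcoeff k]
          exact norm_sub_le _ _
      _ = (1 + ‖a i‖) * ∑ k ∈ Finset.range (s.card + 1), ‖p.coeff k‖ := by
          rw [Finset.sum_add_distrib, hS1, hS2]; ring
      _ ≤ (1 + ‖a i‖) * ∏ j ∈ s, (1 + ‖a j‖) := by
          refine mul_le_mul_of_nonneg_left ih ?_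
          positivity

lemma euclidean_coord_le_norm {n : ℕ} (x : EuclideanSpace ℂ (Fin n)) (i : Fin n) :
    ‖x i‖ ≤ ‖x‖ := by
  rw [EuclideanSpace.norm_eq]
  have h1 : ‖x i‖ = Real.sqrt (‖x i‖ ^ 2) := (Real.sqrt_sq (norm_nonneg _)).symm
  rw [h1]
  refine Real.sqrt_le_sqrt ?_
  exact Finset.single_le_sum (fun j _ => sq_nonneg ‖x j‖) (Finset.mem_univ i)

/-- Gautschi: for the Vandermonde matrix `V` with distinct nodes,
`‖V⁻¹‖_op ≤ √m · max_i ∏_{j≠i} (1+|z_j|)/|z_j − z_i|`. -/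
theorem vandermonde_inverse_norm_bound (m : ℕ) (hm : 0 < m)
    (z : Fin m → ℂ) (hz : Function.Injective z) :
    matOpNorm ((vandermonde' m z)⁻¹) ≤
      Real.sqrt m *
        ⨆ i : Fin m, ∏ j ∈ Finset.univ.erase i, (1 + ‖z j‖) / ‖z j - z i‖ := by
  classical
  have hmne : Nonempty (Fin m) := ⟨⟨0, hm⟩⟩
  set c : Fin m → ℂ := fun i => ∏ j ∈ Finset.univ.erase i, (z i - z j)⁻¹ with hc
  set L : Fin m → Polynomial ℂ :=
    fun i => C (c i) * ∏ j ∈ Finset.univ.erase i, (X - C (z j)) with hL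
  set W : Matrix (Fin m) (Fin m) ℂ := fun i k => (L i).coeff k with hW
  have hcard : ∀ i : Fin m, (Finset.univ.erase i).card = m - 1 := by
    intro i
    rw [Finset.card_erase_of_mem (Finset.mem_univ i), Finset.card_univ, Fintype.card_fin]
  have hzne : ∀ i : Fin m, ∀ j ∈ Finset.univ.erase i, z i - z j ≠ 0 := by
    intro i j hj
    have hji : j ≠ i := Finset.ne_of_mem_erase hj
    exact sub_ne_zero.mpr fun h => hji (hz h.symm)
  have hdeg : ∀ i, (L i).natDegree < m := by
    intro i
    have h1 : (L i).natDegree ≤ (∏ j ∈ Finset.univ.erase i, (X - C (z j))).natDegree := by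
      rw [hL]
      refine le_trans (Polynomial.natDegree_mul_le) ?_
      simp
    have h2 : (∏ j ∈ Finset.univ.erase i, (X - C (z j))).natDegree ≤ m - 1 := by
      refine le_trans (Polynomial.natDegree_prod_le _ _) ?_
      simp [Polynomial.natDegree_X_sub_C, hcard i]
    exact lt_of_le_of_lt (le_trans h1 h2) (Nat.sub_lt hm one_pos)
  -- evaluation of L i
  have heval : ∀ i x, Polynomial.eval x (L i)
      = c i * ∏ j ∈ Finset.univ.erase i, (x - z j) := by
    intro i x
    rw [hL]
    simp [Polynomial.eval_prod]
  have hWV : W * vandermonde' m z = 1 := by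
    ext i i'
    rw [Matrix.mul_apply]
    have hsum : ∑ k : Fin m, W i k * vandermonde' m z k i'
        = Polynomial.eval (z i') (L i) := by
      rw [Polynomial.eval_eq_sum_range' (hdeg i)]
      rw [← Fin.sum_univ_eq_sum_range (fun k => (L i).coeff k * z i' ^ k) m]
      rfl
    rw [hsum, heval]
    rcases eq_or_ne i i' with h | h
    · subst h
      rw [Matrix.one_apply_eq, hc]
      rw [← Finset.prod_mul_distrib]
      rw [Finset.prod_congr rfl (fun j hj => inv_mul_cancel₀ (hzne i j hj))]
      simp
    · rw [Matrix.one_apply_ne' (Ne.symm h)]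
      have : ∏ j ∈ Finset.univ.erase i, (z i' - z j) = 0 := by
        refine Finset.prod_eq_zero (Finset.mem_erase.mpr ⟨Ne.symm h, Finset.mem_univ i'⟩) ?_
        simp
      rw [this, mul_zero]
  have hinv : (vandermonde' m z)⁻¹ = W := Matrix.inv_eq_left_inv hWV
  set P : Fin m → ℝ := fun i => ∏ j ∈ Finset.univ.erase i, (1 + ‖z j‖) / ‖z j - z i‖ with hP
  -- row sums
  have hR : ∀ i, ∑ k : Fin m, ‖W i k‖ ≤ P i := by
    intro i
    have hsum : ∑ k : Fin m, ‖W i k‖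
        = ∑ k ∈ Finset.range m, ‖(L i).coeff k‖ :=
      Fin.sum_univ_eq_sum_range (fun k => ‖(L i).coeff k‖) m
    have hm1 : (Finset.univ.erase i).card + 1 = m := by
      rw [hcard i]; omega
    have hcoeff : ∀ k, ‖(L i).coeff k‖
        = ‖c i‖ * ‖(∏ j ∈ Finset.univ.erase i, (X - C (z j))).coeff k‖ := by
      intro k
      rw [hL]
      simp [Polynomial.coeff_C_mul]
    have hA := sum_norm_coeff_prod_le (Finset.univ.erase i) z
    rw [hm1] at hA
    have hci : ‖c i‖ = ∏ j ∈ Finset.univ.erase i, ‖z j - z i‖⁻¹ := by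
      rw [hc]
      rw [norm_prod]
      refine Finset.prod_congr rfl fun j hj => ?_
      rw [norm_inv, norm_sub_rev]
    calc ∑ k : Fin m, ‖W i k‖
        = ‖c i‖ * ∑ k ∈ Finset.range m,
            ‖(∏ j ∈ Finset.univ.erase i, (X - C (z j))).coeff k‖ := by
          rw [hsum, Finset.mul_sum]
          exact Finset.sum_congr rfl fun k _ => hcoeff k
      _ ≤ ‖c i‖ * ∏ j ∈ Finset.univ.erase i, (1 + ‖z j‖) :=
          mul_le_mul_of_nonneg_left hA (norm_nonneg _)
      _ = P i := by
          rw [hci, ← Finset.prod_mul_distrib, hP]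
          refine Finset.prod_congr rfl fun j hj => ?_
          rw [div_eq_mul_inv, mul_comm]
  have hP0 : ∀ i, 0 ≤ P i := by
    intro i
    refine Finset.prod_nonneg fun j _ => ?_
    positivity
  set T : ℝ := ⨆ i : Fin m, P i with hT
  have hPT : ∀ i, P i ≤ T := fun i => le_ciSup (Set.Finite.bddAbove (Set.finite_range P)) i
  have hT0 : 0 ≤ T := le_trans (hP0 ⟨0, hm⟩) (hPT ⟨0, hm⟩)
  rw [hinv]
  show ‖LinearMap.toContinuousLinearMap (Matrix.toEuclideanLin W)‖ ≤ Real.sqrt m * T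
  refine ContinuousLinearMap.opNorm_le_bound _ (mul_nonneg (Real.sqrt_nonneg _) hT0) ?_
  intro x
  have happ : LinearMap.toContinuousLinearMap (Matrix.toEuclideanLin W) x
      = Matrix.toEuclideanLin W x := rfl
  rw [happ]
  have hcoordbd : ∀ i : Fin m, ‖(Matrix.toEuclideanLin W x) i‖ ≤ T * ‖x‖ := by
    intro i
    have h1 : (Matrix.toEuclideanLin W x) i = ∑ k, W i k * x k := by
      simp [Matrix.toEuclideanLin_apply, Matrix.mulVec, dotProduct]
    rw [h1]
    calc ‖∑ k, W i k * x k‖ ≤ ∑ k, ‖W i k * x k‖ := norm_sum_le _ _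
      _ ≤ ∑ k, ‖W i k‖ * ‖x‖ := by
          refine Finset.sum_le_sum fun k _ => ?_
          rw [norm_mul]
          exact mul_le_mul_of_nonneg_left (euclidean_coord_le_norm x k) (norm_nonneg _)
      _ = (∑ k, ‖W i k‖) * ‖x‖ := by rw [Finset.sum_mul]
      _ ≤ T * ‖x‖ :=
          mul_le_mul_of_nonneg_right (le_trans (hR i) (hPT i)) (norm_nonneg _)
  have hnorm : ‖Matrix.toEuclideanLin W x‖
      = Real.sqrt (∑ i, ‖(Matrix.toEuclideanLin W x) i‖ ^ 2) := by
    rw [EuclideanSpace.norm_eq]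
  rw [hnorm]
  have hsumle : ∑ i, ‖(Matrix.toEuclideanLin W x) i‖ ^ 2 ≤ m * (T * ‖x‖) ^ 2 := by
    calc ∑ i, ‖(Matrix.toEuclideanLin W x) i‖ ^ 2
        ≤ ∑ _i : Fin m, (T * ‖x‖) ^ 2 := by
          refine Finset.sum_le_sum fun i _ => ?_
          exact pow_le_pow_left₀ (norm_nonneg _) (hcoordbd i) 2
      _ = m * (T * ‖x‖) ^ 2 := by
          rw [Finset.sum_const, Finset.card_univ, Fintype.card_fin, nsmul_eq_mul]
  calc Real.sqrt (∑ i, ‖(Matrix.toEuclideanLin W x) i‖ ^ 2)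
      ≤ Real.sqrt (m * (T * ‖x‖) ^ 2) := Real.sqrt_le_sqrt hsumle
    _ = Real.sqrt m * (T * ‖x‖) := by
        rw [Real.sqrt_mul (Nat.cast_nonneg m), Real.sqrt_sq (by positivity)]
    _ = Real.sqrt m * T * ‖x‖ := by ring
end

section
/- Let a ∈ ℓ¹(ℤ) with â continuous, and suppose that for every ω ∈ 𝕋 the values â((ω+j)/m), j ∈ {0,…,m−1}, are pairwise distinct. Then the block multiplication operator 𝔄_m^{−1} on (L²(𝕋))^m defined by pointwise inversion of the Vandermonde matrices 𝔄_m(ω) (with nodes conj(â((ω+j)/m)) and rows indexed by powers 0,…,m−1) is a bounded operator, with ‖𝔄_m^{−1}‖_op ≤ √m · 𝔠^{−(m−1)} · (1 + max_ω |â(ω)|)^{m−1}, where 𝔠 = min_{i≠j} min_ω |â((ω+j)/m) − â((ω+i)/m)| > 0. -/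
open MeasureTheory Polynomial
open scoped Real

/-- The Vandermonde matrix `𝔄_m(ω)` with `(k,j)` entry `conj(â((ω+j)/m))^k`. -/
noncomputable def vandA (a : ℤ → ℂ) (m : ℕ) (ω : ℝ) : Matrix (Fin m) (Fin m) ℂ :=
  fun k j => (starRingEnd ℂ) (ahat a ((ω + j) / m)) ^ (k : ℕ)

/-- The torus `𝕋`, identified with `[0,1) ⊂ ℝ` with Lebesgue measure. -/
noncomputable def μT : Measure ℝ := MeasureTheory.volume.restrict (Set.Ico (0 : ℝ) 1)

/-! ### Auxiliary lemmas on `ahat` -/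

lemma norm_term (k : ℤ) (ω : ℝ) : ‖Complex.exp (-2 * π * Complex.I * k * ω)‖ = 1 := by
  rw [Complex.norm_exp]
  have : (-2 * ↑π * Complex.I * (k:ℂ) * (ω:ℝ)).re = 0 := by
    simp [Complex.mul_re, Complex.mul_im]
  rw [this, Real.exp_zero]

lemma ahat_continuous (a : ℤ → ℂ) (ha : Summable fun k => ‖a k‖) : Continuous (ahat a) := by
  unfold ahat
  apply continuous_tsum (u := fun k => ‖a k‖)
    (f := fun (k : ℤ) (ω : ℝ) => a k * Complex.exp (-2 * π * Complex.I * k * ω))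
  · intro k
    exact continuous_const.mul (Complex.continuous_exp.comp (by continuity))
  · exact ha
  · intro k ω
    rw [norm_mul, norm_term, mul_one]

lemma ahat_periodic (a : ℤ → ℂ) : Function.Periodic (ahat a) 1 := by
  intro ω
  unfold ahat
  congr 1
  ext k
  have : (-2 * ↑π * Complex.I * (k:ℂ) * ((ω:ℝ) + 1 : ℝ)) =
      -2 * ↑π * Complex.I * (k:ℂ) * (ω:ℝ) + (-k : ℤ) * (2 * ↑π * Complex.I) := by
    push_cast; ring
  rw [this, Complex.exp_add, Complex.exp_int_mul_two_pi_mul_I, mul_one]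

lemma ahat_sub_int (a : ℤ → ℂ) (x : ℝ) (n : ℤ) : ahat a (x - n) = ahat a x := by
  have := (ahat_periodic a).sub_int_mul_eq (x := x) n
  rwa [mul_one] at this

/-! ### Sum of coefficient norms of a polynomial -/

noncomputable def coeffNorm (P : ℂ[X]) : ℝ := ∑' k : ℕ, ‖P.coeff k‖

lemma summable_coeffNorm (P : ℂ[X]) : Summable fun k : ℕ => ‖P.coeff k‖ := by
  apply summable_of_ne_finset_zero (s := P.support)
  intro k hk
  simp [Polynomial.notMem_support_iff.mp hk]

lemma coeffNorm_nonneg (P : ℂ[X]) : 0 ≤ coeffNorm P :=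
  tsum_nonneg fun k => norm_nonneg _

lemma coeff_le_coeffNorm (P : ℂ[X]) (k : ℕ) : ‖P.coeff k‖ ≤ coeffNorm P :=
  Summable.le_tsum (summable_coeffNorm P) k fun _ _ => norm_nonneg _

lemma coeffNorm_one : coeffNorm (1 : ℂ[X]) = 1 := by
  unfold coeffNorm
  rw [tsum_eq_single 0 (by intro k hk; simp [Polynomial.coeff_one, hk])]
  simp

lemma coeffNorm_C_mul (a : ℂ) (P : ℂ[X]) : coeffNorm (C a * P) = ‖a‖ * coeffNorm P := by
  unfold coeffNorm
  rw [← tsum_mul_left]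
  congr 1; ext k
  rw [Polynomial.coeff_C_mul, norm_mul]

lemma coeffNorm_mul_X (P : ℂ[X]) : coeffNorm (P * X) = coeffNorm P := by
  unfold coeffNorm
  rw [Summable.tsum_eq_zero_add (summable_coeffNorm _)]
  simp only [Polynomial.coeff_mul_X, Polynomial.mul_coeff_zero, Polynomial.coeff_X_zero,
    mul_zero, norm_zero, zero_add]

lemma coeffNorm_add_le (P Q : ℂ[X]) : coeffNorm (P + Q) ≤ coeffNorm P + coeffNorm Q := by
  unfold coeffNorm
  rw [← Summable.tsum_add (summable_coeffNorm P) (summable_coeffNorm Q)]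
  apply Summable.tsum_le_tsum _ (summable_coeffNorm _) ((summable_coeffNorm P).add (summable_coeffNorm Q))
  intro k
  simp only [Polynomial.coeff_add]
  exact norm_add_le _ _

lemma coeffNorm_mul_X_sub_C (P : ℂ[X]) (w : ℂ) :
    coeffNorm (P * (X - C w)) ≤ (1 + ‖w‖) * coeffNorm P := by
  have : P * (X - C w) = P * X + C (-w) * P := by ring_nf; rw [Polynomial.C_neg]; ring
  rw [this]
  calc coeffNorm (P * X + C (-w) * P) ≤ coeffNorm (P * X) + coeffNorm (C (-w) * P) :=
        coeffNorm_add_le _ _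
    _ = coeffNorm P + ‖w‖ * coeffNorm P := by rw [coeffNorm_mul_X, coeffNorm_C_mul, norm_neg]
    _ = (1 + ‖w‖) * coeffNorm P := by ring

lemma coeffNorm_prod_X_sub_C {ι : Type*} [DecidableEq ι] (t : Finset ι) (w : ι → ℂ) :
    coeffNorm (∏ j ∈ t, (X - C (w j))) ≤ ∏ j ∈ t, (1 + ‖w j‖) := by
  induction t using Finset.induction_on with
  | empty => simp [coeffNorm_one]
  | @insert i t hi ih =>
    rw [Finset.prod_insert hi, Finset.prod_insert hi, mul_comm (X - C (w i))]
    calc coeffNorm ((∏ j ∈ t, (X - C (w j))) * (X - C (w i)))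
        ≤ (1 + ‖w i‖) * coeffNorm (∏ j ∈ t, (X - C (w j))) := coeffNorm_mul_X_sub_C _ _
      _ ≤ (1 + ‖w i‖) * ∏ j ∈ t, (1 + ‖w j‖) := by
          apply mul_le_mul_of_nonneg_left ih
          positivity

/-! ### The Lagrange-basis coefficient matrix -/

lemma basis_eq (m : ℕ) (x : Fin m → ℂ) (i : Fin m) :
    Lagrange.basis Finset.univ x i =
      C (∏ j ∈ Finset.univ.erase i, (x i - x j)⁻¹) *
        ∏ j ∈ Finset.univ.erase i, (X - C (x j)) := by
  unfold Lagrange.basis Lagrange.basisDivisor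
  rw [Finset.prod_mul_distrib, map_prod]

lemma coeffNorm_basis_le (m : ℕ) (x : Fin m → ℂ) (i : Fin m)
    (c M : ℝ) (hc0 : 0 < c) (hcd : ∀ i j : Fin m, i ≠ j → c ≤ ‖x i - x j‖)
    (hM : ∀ j, ‖x j‖ ≤ M) :
    coeffNorm (Lagrange.basis Finset.univ x i) ≤ c⁻¹ ^ (m - 1) * (1 + M) ^ (m - 1) := by
  have hcard : (Finset.univ.erase i).card = m - 1 := by
    rw [Finset.card_erase_of_mem (Finset.mem_univ i), Finset.card_univ, Fintype.card_fin]
  rw [basis_eq, coeffNorm_C_mul]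
  have h1 : ‖∏ j ∈ Finset.univ.erase i, (x i - x j)⁻¹‖ ≤ c⁻¹ ^ (m - 1) := by
    rw [norm_prod, ← hcard, ← Finset.prod_const]
    apply Finset.prod_le_prod (fun j _ => norm_nonneg _)
    intro j hj
    rw [norm_inv]
    exact inv_anti₀ hc0 (hcd i j (Finset.ne_of_mem_erase hj).symm)
  have h2 : coeffNorm (∏ j ∈ Finset.univ.erase i, (X - C (x j))) ≤ (1 + M) ^ (m - 1) := by
    calc coeffNorm (∏ j ∈ Finset.univ.erase i, (X - C (x j)))
        ≤ ∏ j ∈ Finset.univ.erase i, (1 + ‖x j‖) := coeffNorm_prod_X_sub_C _ _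
      _ ≤ ∏ j ∈ Finset.univ.erase i, (1 + M) := by
          apply Finset.prod_le_prod (fun j _ => by positivity)
          intro j _; linarith [hM j]
      _ = (1 + M) ^ (m - 1) := by rw [Finset.prod_const, hcard]
  have hM0 : (0:ℝ) ≤ M := le_trans (norm_nonneg _) (hM i)
  calc ‖∏ j ∈ Finset.univ.erase i, (x i - x j)⁻¹‖
        * coeffNorm (∏ j ∈ Finset.univ.erase i, (X - C (x j)))
      ≤ c⁻¹ ^ (m - 1) * ((1 + M) ^ (m - 1)) := by
        apply mul_le_mul h1 h2 (coeffNorm_nonneg _) (by positivity)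

noncomputable def lagW (m : ℕ) (x : Fin m → ℂ) : Matrix (Fin m) (Fin m) ℂ :=
  fun j k => (Lagrange.basis Finset.univ x j).coeff (k : ℕ)

lemma lagW_mul_vand (m : ℕ) (hm : 1 ≤ m) (x : Fin m → ℂ) (hinj : Function.Injective x) :
    lagW m x * (Matrix.of fun k j : Fin m => x j ^ (k : ℕ)) = 1 := by
  have hinjOn : Set.InjOn x ↑(Finset.univ : Finset (Fin m)) := fun p _ q _ h => hinj h
  ext j j'
  rw [Matrix.mul_apply]
  have hdeg : (Lagrange.basis Finset.univ x j).natDegree < m := by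
    rw [Lagrange.natDegree_basis hinjOn (Finset.mem_univ j), Finset.card_univ, Fintype.card_fin]
    omega
  have : ∑ k : Fin m, lagW m x j k * Matrix.of (fun k j : Fin m => x j ^ (k : ℕ)) k j'
      = Polynomial.eval (x j') (Lagrange.basis Finset.univ x j) := by
    rw [Polynomial.eval_eq_sum_range' hdeg]
    exact Fin.sum_univ_eq_sum_range
      (fun k => (Lagrange.basis Finset.univ x j).coeff k * x j' ^ k) m
  rw [this]
  by_cases h : j = j'
  · subst h
    rw [Lagrange.eval_basis_self hinjOn (Finset.mem_univ j), Matrix.one_apply_eq]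
  · rw [Lagrange.eval_basis_of_ne h (Finset.mem_univ j'), Matrix.one_apply_ne h]

lemma vand_inv_eq (m : ℕ) (hm : 1 ≤ m) (x : Fin m → ℂ) (hinj : Function.Injective x) :
    (Matrix.of fun k j : Fin m => x j ^ (k : ℕ))⁻¹ = lagW m x :=
  Matrix.inv_eq_left_inv (lagW_mul_vand m hm x hinj)

lemma mulVec_sq_bound (m : ℕ) (W : Matrix (Fin m) (Fin m) ℂ) (D : ℝ) (hD : 0 ≤ D)
    (hrow : ∀ j, ∑ k, ‖W j k‖ ≤ D) (v : Fin m → ℂ) :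
    ∑ j, ‖W.mulVec v j‖ ^ 2 ≤ (m * D ^ 2) * ∑ k, ‖v k‖ ^ 2 := by
  have hentry : ∀ j k, ‖W j k‖ ≤ D := fun j k =>
    le_trans (Finset.single_le_sum (f := fun k => ‖W j k‖) (fun _ _ => norm_nonneg _)
      (Finset.mem_univ k)) (hrow j)
  have step1 : ∀ j, ‖W.mulVec v j‖ ^ 2 ≤ D * ∑ k, ‖W j k‖ * ‖v k‖ ^ 2 := by
    intro j
    have h1 : ‖W.mulVec v j‖ ≤ ∑ k, ‖W j k‖ * ‖v k‖ := by
      rw [Matrix.mulVec, dotProduct]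
      exact (norm_sum_le _ _).trans (le_of_eq (by simp [norm_mul]))
    have h2 : ‖W.mulVec v j‖ ^ 2 ≤ (∑ k, ‖W j k‖ * ‖v k‖) ^ 2 :=
      pow_le_pow_left₀ (norm_nonneg _) h1 2
    refine h2.trans ?_
    have hcs := Finset.sum_mul_sq_le_sq_mul_sq Finset.univ
      (fun k => Real.sqrt ‖W j k‖) (fun k => Real.sqrt ‖W j k‖ * ‖v k‖)
    have he1 : ∀ k : Fin m, Real.sqrt ‖W j k‖ * (Real.sqrt ‖W j k‖ * ‖v k‖)
        = ‖W j k‖ * ‖v k‖ := by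
      intro k; rw [← mul_assoc, Real.mul_self_sqrt (norm_nonneg _)]
    have he2 : ∀ k : Fin m, (Real.sqrt ‖W j k‖) ^ 2 = ‖W j k‖ := fun k =>
      Real.sq_sqrt (norm_nonneg _)
    have he3 : ∀ k : Fin m, (Real.sqrt ‖W j k‖ * ‖v k‖) ^ 2 = ‖W j k‖ * ‖v k‖ ^ 2 := by
      intro k; rw [mul_pow, he2]
    simp only [he1, he2, he3] at hcs
    refine hcs.trans ?_
    exact mul_le_mul_of_nonneg_right (hrow j) (Finset.sum_nonneg fun k _ => by positivity)
  calc ∑ j, ‖W.mulVec v j‖ ^ 2 ≤ ∑ j, D * ∑ k, ‖W j k‖ * ‖v k‖ ^ 2 :=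
        Finset.sum_le_sum fun j _ => step1 j
    _ = D * ∑ k, (∑ j, ‖W j k‖) * ‖v k‖ ^ 2 := by
        simp only [Finset.sum_mul, ← Finset.mul_sum]
        rw [Finset.sum_comm]
    _ ≤ D * ∑ k, ((m : ℝ) * D) * ‖v k‖ ^ 2 := by
        apply mul_le_mul_of_nonneg_left _ hD
        apply Finset.sum_le_sum
        intro k _
        apply mul_le_mul_of_nonneg_right _ (by positivity)
        calc (∑ j, ‖W j k‖) ≤ ∑ _j : Fin m, D := Finset.sum_le_sum fun j _ => hentry j k
          _ = m * D := by rw [Finset.sum_const, Finset.card_univ, Fintype.card_fin, nsmul_eq_mul]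
    _ = (m * D ^ 2) * ∑ k, ‖v k‖ ^ 2 := by rw [← Finset.mul_sum]; ring

/-! ### Positive lower bound on node separation -/

lemma ex_pos_lower (a : ℤ → ℂ) (ha : Summable fun k => ‖a k‖) (m : ℕ) (hm : 2 ≤ m)
    (hdist : ∀ ω : ℝ, ∀ i j : Fin m, i ≠ j →
      ahat a ((ω + i) / m) ≠ ahat a ((ω + j) / m)) :
    ∃ ε > 0, ∀ (i j : Fin m) (ω : ℝ), i ≠ j →
      ε ≤ ‖ahat a ((ω + j) / m) - ahat a ((ω + i) / m)‖ := by
  set F : (Fin m × Fin m) × ℝ → ℝ :=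
    fun p => ‖ahat a ((p.2 + p.1.2) / m) - ahat a ((p.2 + p.1.1) / m)‖ with hF
  have hFcont : Continuous F := by
    apply Continuous.norm
    apply Continuous.sub
    · exact (ahat_continuous a ha).comp (by fun_prop)
    · exact (ahat_continuous a ha).comp (by fun_prop)
  set P : Set (Fin m × Fin m) := {p | p.1 ≠ p.2} with hP
  set K : Set ((Fin m × Fin m) × ℝ) := P ×ˢ Set.Icc (0:ℝ) m with hK
  have hKc : IsCompact K := (Set.toFinite P).isCompact.prod isCompact_Icc
  have hKne : K.Nonempty := by
    refine ⟨((⟨0, by omega⟩, ⟨1, by omega⟩), 0), ?_, ?_⟩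
    · show (⟨0, by omega⟩ : Fin m) ≠ ⟨1, by omega⟩
      intro h
      simpa using congrArg Fin.val h
    · exact ⟨le_refl 0, by positivity⟩
  obtain ⟨p0, hp0K, hp0min⟩ := hKc.exists_isMinOn hKne hFcont.continuousOn
  refine ⟨F p0, ?_, ?_⟩
  · have hne := hdist p0.2 p0.1.1 p0.1.2 hp0K.1
    rw [hF]
    simp only [norm_pos_iff, sub_ne_zero]
    exact Ne.symm hne
  · intro i j ω hij
    have hm0 : (0:ℝ) < m := by positivity
    set n : ℤ := ⌊ω / m⌋ with hn
    set ω' : ℝ := ω - m * n with hω'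
    have hω'mem : ω' ∈ Set.Icc (0:ℝ) m := by
      constructor
      · have := Int.sub_floor_div_mul_nonneg ω hm0
        rw [hω', hn, mul_comm]
        exact this
      · have := Int.sub_floor_div_mul_lt ω hm0
        rw [hω', hn, mul_comm]
        exact le_of_lt this
    have hval : ∀ l : Fin m, ahat a ((ω' + l) / m) = ahat a ((ω + l) / m) := by
      intro l
      have : (ω' + l) / m = (ω + l) / m - n := by
        rw [hω']; field_simp; ring
      rw [this, ahat_sub_int]
    have hmem : ((i, j), ω') ∈ K := ⟨hij, hω'mem⟩
    have := hp0min hmem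
    calc F p0 ≤ F ((i, j), ω') := this
      _ = ‖ahat a ((ω + j) / m) - ahat a ((ω + i) / m)‖ := by
          rw [hF]; simp only; rw [hval, hval]

/-! ### Sup bound -/

lemma le_sup_ahat (a : ℤ → ℂ) (ha : Summable fun k => ‖a k‖) (ω : ℝ) :
    ‖ahat a ω‖ ≤ ⨆ ω' ∈ Set.Icc (0:ℝ) 1, ‖ahat a ω'‖ := by
  set g : ℝ → ℝ := fun ω => ‖ahat a ω‖ with hg
  have hgc : Continuous g := (ahat_continuous a ha).norm
  have h01 : (0:ℝ) ∈ Set.Icc (0:ℝ) 1 := Set.mem_Icc.mpr (by norm_num)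
  obtain ⟨x0, hx0, hmax⟩ := isCompact_Icc.exists_isMaxOn ⟨0, h01⟩ hgc.continuousOn
  set B : ℝ := g x0 with hB
  have hB0 : 0 ≤ B := le_trans (norm_nonneg _) (hmax h01)
  have hbdd : BddAbove (Set.range fun ω' => ⨆ _ : ω' ∈ Set.Icc (0:ℝ) 1, g ω') := by
    refine ⟨B, ?_⟩
    rintro r ⟨ω', rfl⟩
    show (⨆ _ : ω' ∈ Set.Icc (0:ℝ) 1, g ω') ≤ B
    by_cases h : ω' ∈ Set.Icc (0:ℝ) 1
    · rw [(ciSup_pos h : (⨆ _ : ω' ∈ Set.Icc (0:ℝ) 1, g ω') = g ω')]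
      exact hmax h
    · have : IsEmpty (ω' ∈ Set.Icc (0:ℝ) 1) := ⟨h⟩
      rw [Real.iSup_of_isEmpty]
      exact hB0
  have hfract : g ω = g (Int.fract ω) := by
    rw [hg]
    simp only
    rw [Int.fract, ← ahat_sub_int a ω ⌊ω⌋]
  have hfm : Int.fract ω ∈ Set.Icc (0:ℝ) 1 :=
    ⟨Int.fract_nonneg ω, (Int.fract_lt_one ω).le⟩
  calc g ω = g (Int.fract ω) := hfract
    _ = ⨆ _ : Int.fract ω ∈ Set.Icc (0:ℝ) 1, g (Int.fract ω) :=
        (ciSup_pos hfm :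
          (⨆ _ : Int.fract ω ∈ Set.Icc (0:ℝ) 1, g (Int.fract ω)) = g (Int.fract ω)).symm
    _ ≤ ⨆ ω' ∈ Set.Icc (0:ℝ) 1, g ω' := le_ciSup hbdd (Int.fract ω)

/-! ### Main theorem -/

/-- with pairwise-distinct nodes, pointwise inversion of `𝔄_m(ω)` defines a
bounded operator on `(L²(𝕋))^m` with
`‖𝔄_m⁻¹‖ ≤ √m · 𝔠^{−(m−1)} · (1 + max_ω |â(ω)|)^{m−1}`. -/
theorem vand_inverse_operator_bounded (a : ℤ → ℂ) (ha : Summable fun k => ‖a k‖)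
    (m : ℕ) (hm : 2 ≤ m)
    (hdist : ∀ ω : ℝ, ∀ i j : Fin m, i ≠ j →
      ahat a ((ω + i) / m) ≠ ahat a ((ω + j) / m))
    (c : ℝ)
    (hc : c = sInf {r : ℝ | ∃ (i j : Fin m) (ω : ℝ), i ≠ j ∧
      r = ‖ahat a ((ω + j) / m) - ahat a ((ω + i) / m)‖})
    (T : Lp (EuclideanSpace ℂ (Fin m)) 2 μT →L[ℂ] Lp (EuclideanSpace ℂ (Fin m)) 2 μT)
    (hT : ∀ x : Lp (EuclideanSpace ℂ (Fin m)) 2 μT,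
      ∀ᵐ ω ∂μT, (T x : ℝ → EuclideanSpace ℂ (Fin m)) ω =
        (WithLp.equiv 2 (Fin m → ℂ)).symm
          (((vandA a m ω)⁻¹).mulVec
            (WithLp.equiv 2 (Fin m → ℂ) ((x : ℝ → EuclideanSpace ℂ (Fin m)) ω)))) :
    0 < c ∧
    ‖T‖ ≤ Real.sqrt m * c⁻¹ ^ (m - 1) *
      (1 + ⨆ ω ∈ Set.Icc (0 : ℝ) 1, ‖ahat a ω‖) ^ (m - 1) := by
  obtain ⟨ε, hε0, hεle⟩ := ex_pos_lower a ha m hm hdist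
  set S : Set ℝ := {r : ℝ | ∃ (i j : Fin m) (ω : ℝ), i ≠ j ∧
      r = ‖ahat a ((ω + j) / m) - ahat a ((ω + i) / m)‖} with hS
  have hSne : S.Nonempty := by
    refine ⟨_, ⟨⟨0, by omega⟩, ⟨1, by omega⟩, 0, ?_, rfl⟩⟩
    intro h
    simpa using congrArg Fin.val h
  have hεlb : ∀ r ∈ S, ε ≤ r := by
    rintro r ⟨i, j, ω, hij, rfl⟩
    exact hεle i j ω hij
  have hcε : ε ≤ c := hc ▸ le_csInf hSne hεlb
  have hc0 : 0 < c := lt_of_lt_of_le hε0 hcε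
  have hSbdd : BddBelow S := ⟨ε, hεlb⟩
  refine ⟨hc0, ?_⟩
  set M : ℝ := ⨆ ω ∈ Set.Icc (0 : ℝ) 1, ‖ahat a ω‖ with hM
  have hMb : ∀ ω : ℝ, ‖ahat a ω‖ ≤ M := le_sup_ahat a ha
  have hM0 : 0 ≤ M := le_trans (norm_nonneg _) (hMb 0)
  set D : ℝ := c⁻¹ ^ (m - 1) * (1 + M) ^ (m - 1) with hD
  have hD0 : 0 ≤ D := by positivity
  set K : ℝ := Real.sqrt m * c⁻¹ ^ (m - 1) * (1 + M) ^ (m - 1) with hK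
  have hKD : K = Real.sqrt m * D := by rw [hK, hD]; ring
  have hK0 : 0 ≤ K := by
    rw [hKD]; positivity
  -- pointwise matrix bound
  have hpoint : ∀ (ω : ℝ) (v : EuclideanSpace ℂ (Fin m)),
      ‖(WithLp.equiv 2 (Fin m → ℂ)).symm
          (((vandA a m ω)⁻¹).mulVec (WithLp.equiv 2 (Fin m → ℂ) v))‖ ≤ K * ‖v‖ := by
    intro ω v
    set x : Fin m → ℂ := fun j => (starRingEnd ℂ) (ahat a ((ω + j) / m)) with hx
    have hinj : Function.Injective x := by
      intro i j hxij
      by_contra hne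
      exact hdist ω i j hne ((starRingEnd ℂ).injective hxij)
    have hvA : vandA a m ω = Matrix.of fun k j : Fin m => x j ^ (k : ℕ) := rfl
    have hinv : (vandA a m ω)⁻¹ = lagW m x := by
      rw [hvA]; exact vand_inv_eq m (by omega) x hinj
    have hrow : ∀ j, ∑ k, ‖lagW m x j k‖ ≤ D := by
      intro j
      have h1 : ∑ k : Fin m, ‖lagW m x j k‖
          = ∑ k ∈ Finset.range m, ‖(Lagrange.basis Finset.univ x j).coeff k‖ :=
        Fin.sum_univ_eq_sum_range (fun k => ‖(Lagrange.basis Finset.univ x j).coeff k‖) m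
      have h2 : ∑ k ∈ Finset.range m, ‖(Lagrange.basis Finset.univ x j).coeff k‖
          ≤ coeffNorm (Lagrange.basis Finset.univ x j) :=
        Summable.sum_le_tsum _ (fun _ _ => norm_nonneg _) (summable_coeffNorm _)
      have h3 := coeffNorm_basis_le m x j c M hc0 ?_ ?_
      · rw [h1]; exact h2.trans h3
      · intro i j' hij'
        have : x i - x j' = (starRingEnd ℂ) (ahat a ((ω + i) / m) - ahat a ((ω + j') / m)) := by
          rw [hx]; simp [map_sub]
        rw [this, RCLike.norm_conj]
        have hmemS : ‖ahat a ((ω + i) / m) - ahat a ((ω + j') / m)‖ ∈ S := by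
          refine ⟨j', i, ω, Ne.symm hij', ?_⟩
          rw [norm_sub_rev]
        rw [hc]
        exact csInf_le hSbdd hmemS
      · intro j'
        rw [hx]
        simp only
        rw [RCLike.norm_conj]
        exact hMb _
    have hsq := mulVec_sq_bound m (lagW m x) D hD0 hrow (WithLp.equiv 2 (Fin m → ℂ) v)
    rw [hinv]
    rw [EuclideanSpace.norm_eq, EuclideanSpace.norm_eq]
    have hlhs : ∀ j : Fin m, ‖((WithLp.equiv 2 (Fin m → ℂ)).symm
        ((lagW m x).mulVec (WithLp.equiv 2 (Fin m → ℂ) v))) j‖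
        = ‖(lagW m x).mulVec (WithLp.equiv 2 (Fin m → ℂ) v) j‖ := fun j => rfl
    simp only [hlhs]
    have hvk : ∀ k : Fin m, ‖(WithLp.equiv 2 (Fin m → ℂ) v) k‖ = ‖v k‖ := fun k => rfl
    calc Real.sqrt (∑ j, ‖(lagW m x).mulVec (WithLp.equiv 2 (Fin m → ℂ) v) j‖ ^ 2)
        ≤ Real.sqrt ((m * D ^ 2) * ∑ k, ‖v k‖ ^ 2) := by
          apply Real.sqrt_le_sqrt
          simpa only [hvk] using hsq
      _ = K * Real.sqrt (∑ k, ‖v k‖ ^ 2) := by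
          rw [Real.sqrt_mul (by positivity), Real.sqrt_mul (by positivity),
            Real.sqrt_sq hD0, hKD]
  -- operator norm bound
  apply ContinuousLinearMap.opNorm_le_bound T hK0
  intro f
  have hae := hT f
  have hbound : ∀ᵐ ω ∂μT, ‖(T f : ℝ → EuclideanSpace ℂ (Fin m)) ω‖
      ≤ ‖(K • (f : ℝ → EuclideanSpace ℂ (Fin m))) ω‖ := by
    filter_upwards [hae] with ω hω
    rw [hω]
    have : ‖(K • (f : ℝ → EuclideanSpace ℂ (Fin m))) ω‖ = K * ‖(f : ℝ → EuclideanSpace ℂ (Fin m)) ω‖ := by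
      simp only [Pi.smul_apply, norm_smul, Real.norm_eq_abs, abs_of_nonneg hK0]
    rw [this]
    exact hpoint ω _
  have h1 : eLpNorm ((T f : ℝ → EuclideanSpace ℂ (Fin m))) 2 μT
      ≤ eLpNorm (K • (f : ℝ → EuclideanSpace ℂ (Fin m))) 2 μT :=
    eLpNorm_mono_ae hbound
  rw [eLpNorm_const_smul] at h1
  rw [Lp.norm_def, Lp.norm_def]
  calc (eLpNorm ((T f : ℝ → EuclideanSpace ℂ (Fin m))) 2 μT).toReal
      ≤ ((‖K‖₊ : ENNReal) * eLpNorm ((f : ℝ → EuclideanSpace ℂ (Fin m))) 2 μT).toReal := by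
        apply ENNReal.toReal_mono _ h1
        exact ENNReal.mul_ne_top ENNReal.coe_ne_top (Lp.eLpNorm_ne_top f)
    _ = K * (eLpNorm ((f : ℝ → EuclideanSpace ℂ (Fin m))) 2 μT).toReal := by
        rw [ENNReal.toReal_mul, ENNReal.coe_toReal, coe_nnnorm, Real.norm_eq_abs,
          abs_of_nonneg hK0]
end
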